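/- Let μ = (μ_1,…,μ_m) be an m-partition of n, and let F ∈ ℂ[x] have degree n, exactly m distinct complex roots, and roots α_1,…,α_n listed with multiplicity. Then mult(F) = μ if and only if there exists σ ∈ S_p such that F^{(σ_i)}(α_i) ≠ 0 for all i = 1,…,n. -/

import Mathlib

open Polynomial Finset Equiv

/-- The `n`-tuple `p = (μ_1 repeated μ_1 times, …, μ_m repeated μ_m times)`
associated with an `m`-partition `μ` of `n`. -/
def pTuple {m : ℕ} (μ : Fin m → ℕ) (n : ℕ) : Fin n → ℕ := fun i =>
  ((List.ofFn μ).flatMap fun a => List.replicate a a).getD (i : ℕ) 0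

/-- `S_p`: the set of all distinct rearrangements of the tuple `p` associated with `μ`. -/
def Sp {m : ℕ} (μ : Fin m → ℕ) (n : ℕ) : Finset (Fin n → ℕ) :=
  Finset.image (fun π : Equiv.Perm (Fin n) => pTuple μ n ∘ π) Finset.univ

/-- `mult F = μ`: the multiset of multiplicities of the distinct roots of `F` equals the
multiset of entries of `μ` (equivalently, since `μ_1 ≥ … ≥ μ_m`, the tuple of
multiplicities sorted in decreasing order is `(μ_1, …, μ_m)`). -/
def multEq {m : ℕ} (F : Polynomial ℂ) (μ : Fin m → ℕ) : Prop :=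
  (F.roots.toFinset.val.map fun r => rootMultiplicity r F) = Finset.univ.val.map μ

namespace MyAux

open Multiset

/-- weighted tail sum -/
def A (K : Multiset ℕ) (t : ℕ) : ℕ := (K.map (fun x => x + 1 - t)).sum

lemma A_one (K : Multiset ℕ) : A K 1 = K.sum := by
  simp [A]

lemma A_two (K : Multiset ℕ) (hK : ∀ x ∈ K, 1 ≤ x) : A K 2 + K.card = K.sum := by
  induction K using Multiset.induction_on with
  | empty => simp [A]
  | cons a s ih =>
    have ha : 1 ≤ a := hK a (Multiset.mem_cons_self a s)
    have h2 := ih (fun x hx => hK x (Multiset.mem_cons_of_mem hx))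
    simp only [A, Multiset.map_cons, Multiset.sum_cons, Multiset.card_cons] at h2 ⊢
    omega

lemma A_succ (K : Multiset ℕ) (t : ℕ) :
    A K t = A K (t + 1) + (K.filter (t ≤ ·)).card := by
  induction K using Multiset.induction_on with
  | empty => simp [A]
  | cons a s ih =>
    simp only [A, Multiset.map_cons, Multiset.sum_cons, Multiset.filter_cons] at ih ⊢
    by_cases h : t ≤ a
    · rw [if_pos h]
      simp only [Multiset.card_add, Multiset.card_singleton]
      omega
    · rw [if_neg h]
      simp only [Multiset.card_add, Multiset.card_zero]
      omega

lemma f_eq (K : Multiset ℕ) (t : ℕ) :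
    (K.filter (t ≤ ·)).sum + (K.filter (t ≤ ·)).card = A K t + t * (K.filter (t ≤ ·)).card := by
  induction K using Multiset.induction_on with
  | empty => simp [A]
  | cons a s ih =>
    simp only [A, Multiset.map_cons, Multiset.sum_cons, Multiset.filter_cons] at ih ⊢
    by_cases h : t ≤ a
    · rw [if_pos h]
      simp only [Multiset.sum_add, Multiset.card_add, Multiset.sum_singleton, Multiset.card_singleton, Nat.mul_add, Nat.mul_one]
      omega
    · rw [if_neg h]
      simp only [Multiset.sum_add, Multiset.card_add, Multiset.sum_zero, Multiset.card_zero, Nat.add_zero, Nat.zero_add]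
      omega

lemma A_eventually_zero (K : Multiset ℕ) (t : ℕ) (ht : K.sum + 1 ≤ t) : A K t = 0 := by
  apply Multiset.sum_eq_zero
  intro x hx
  obtain ⟨y, hy, rfl⟩ := Multiset.mem_map.mp hx
  have : y ≤ K.sum := Multiset.le_sum_of_mem hy
  omega

lemma filter_card_split (K : Multiset ℕ) (t : ℕ) :
    (K.filter (t ≤ ·)).card = K.count t + (K.filter (t + 1 ≤ ·)).card := by
  induction K using Multiset.induction_on with
  | empty => simp
  | cons a s ih =>
    rw [Multiset.filter_cons, Multiset.filter_cons, Multiset.count_cons]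
    rcases Nat.lt_trichotomy a t with h | rfl | h
    · rw [if_neg (by omega : ¬ t ≤ a), if_neg (by omega : ¬ t + 1 ≤ a),
        if_neg (by omega : ¬ t = a)]
      simpa using ih
    · rw [if_pos le_rfl, if_neg (by omega : ¬ a + 1 ≤ a), if_pos rfl]
      simp only [Multiset.card_add, Multiset.card_singleton, Multiset.card_zero]
      omega
    · rw [if_pos (by omega : t ≤ a), if_pos (by omega : t + 1 ≤ a),
        if_neg (by omega : ¬ t = a)]
      simp only [Multiset.card_add, Multiset.card_singleton]
      omega

theorem multiset_eq_of_dominance (K M : Multiset ℕ)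
    (hc : K.card = M.card) (hs : K.sum = M.sum)
    (hK : ∀ x ∈ K, 1 ≤ x) (hM : ∀ x ∈ M, 1 ≤ x)
    (hdom : ∀ t, (K.filter (t ≤ ·)).sum ≤ (M.filter (t ≤ ·)).sum) : K = M := by
  set D : ℕ → ℤ := fun t => (A K t : ℤ) - A M t with hD
  have key : ∀ (S : Multiset ℕ) (t : ℕ),
      ((S.filter (t ≤ ·)).sum : ℤ) = t * A S t - ((t : ℤ) - 1) * A S (t + 1) := by
    intro S t
    have h1 := f_eq S t
    have h3 := A_succ S t
    have h1' : ((S.filter (t ≤ ·)).sum : ℤ) + ((S.filter (t ≤ ·)).card : ℤ)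
        = (A S t : ℤ) + (t : ℤ) * ((S.filter (t ≤ ·)).card : ℤ) := by exact_mod_cast h1
    have h3' : (A S t : ℤ) = (A S (t + 1) : ℤ) + ((S.filter (t ≤ ·)).card : ℤ) := by
      exact_mod_cast h3
    linear_combination h1' - ((t : ℤ) - 1) * h3'
  have hstep : ∀ t : ℕ, (t : ℤ) * D t ≤ ((t : ℤ) - 1) * D (t + 1) := by
    intro t
    have h5 : ((K.filter (t ≤ ·)).sum : ℤ) ≤ ((M.filter (t ≤ ·)).sum : ℤ) := by
      exact_mod_cast hdom t
    rw [key K t, key M t] at h5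
    simp only [hD]
    ring_nf
    ring_nf at h5
    linarith
  have hBig : ∀ t, K.sum + M.sum + 1 ≤ t → D t = 0 := by
    intro t ht
    have e1 : A K t = 0 := A_eventually_zero K t (by omega)
    have e2 : A M t = 0 := A_eventually_zero M t (by omega)
    simp [hD, e1, e2]
  have hnonpos : ∀ t, 2 ≤ t → D t ≤ 0 := by
    intro t ht
    by_contra hpos
    push_neg at hpos
    have keyj : ∀ j : ℕ, 0 < D (t + j) := by
      intro j
      induction j with
      | zero => simpa using hpos
      | succ j ih =>
        have hst := hstep (t + j)
        have hc2 : (2 : ℤ) ≤ ((t + j : ℕ) : ℤ) := by push_cast; omega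
        have h₁ : 0 < ((t + j : ℕ) : ℤ) * D (t + j) := mul_pos (by linarith) ih
        have hidx : t + (j + 1) = (t + j) + 1 := by omega
        rw [hidx]
        by_contra hle
        push_neg at hle
        have hprod : (((t + j : ℕ) : ℤ) - 1) * D ((t + j) + 1) ≤ 0 :=
          mul_nonpos_of_nonneg_of_nonpos (by linarith) hle
        linarith
    have h1 := keyj (K.sum + M.sum + 1)
    have h2 := hBig (t + (K.sum + M.sum + 1)) (by omega)
    omega
  have hzero : ∀ t, 2 ≤ t → D t = 0 := by
    intro t ht
    induction t, ht using Nat.le_induction with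
    | base =>
      have hA2 : A K 2 + K.card = K.sum := A_two K hK
      have hB2 : A M 2 + M.card = M.sum := A_two M hM
      simp only [hD]
      omega
    | succ t ht ih =>
      have hst := hstep t
      rw [ih, mul_zero] at hst
      have hd : 0 ≤ D (t + 1) := by
        rcases le_or_gt (D (t+1)) 0 with h | h
        · have hmn : (((t : ℕ) : ℤ) - 1) * D (t + 1) = 0 :=
            le_antisymm (mul_nonpos_of_nonneg_of_nonpos (by omega) h) hst
          rcases mul_eq_zero.mp hmn with h' | h'
          · exfalso; omega
          · omega
        · linarith
      have := hnonpos (t + 1) (by omega)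
      omega
  have hA : ∀ t, 2 ≤ t → A K t = A M t := by
    intro t ht
    have h0 := hzero t ht
    simp only [hD] at h0
    omega
  have hcard_filter : ∀ t, 1 ≤ t → (K.filter (t ≤ ·)).card = (M.filter (t ≤ ·)).card := by
    intro t ht
    rcases Nat.lt_or_ge t 2 with h2 | h2
    · have h1 : t = 1 := by omega
      subst h1
      have e1 : K.filter (1 ≤ ·) = K := by
        rw [Multiset.filter_eq_self]; exact hK
      have e2 : M.filter (1 ≤ ·) = M := by
        rw [Multiset.filter_eq_self]; exact hM
      rw [e1, e2, hc]
    · have h3 := A_succ K t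
      have h4 := A_succ M t
      rw [hA t h2, hA (t+1) (by omega)] at h3
      omega
  ext t
  rcases Nat.eq_zero_or_pos t with rfl | ht
  · have c1 : K.count 0 = 0 := by
      rw [Multiset.count_eq_zero]
      intro h; exact absurd (hK 0 h) (by omega)
    have c2 : M.count 0 = 0 := by
      rw [Multiset.count_eq_zero]
      intro h; exact absurd (hM 0 h) (by omega)
    rw [c1, c2]
  · have s1 := filter_card_split K t
    have s2 := filter_card_split M t
    have h1 := hcard_filter t ht
    have h2 := hcard_filter (t + 1) (by omega)
    omega


def blowup (S : Multiset ℕ) : Multiset ℕ := S.bind fun a => Multiset.replicate a a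

lemma card_filter_blowup (S : Multiset ℕ) (t : ℕ) :
    ((blowup S).filter (t ≤ ·)).card = (S.filter (t ≤ ·)).sum := by
  induction S using Multiset.induction_on with
  | empty => simp [blowup]
  | cons a s ih =>
    rw [blowup, Multiset.cons_bind, ← blowup, Multiset.filter_add, Multiset.card_add, ih,
      Multiset.filter_cons]
    by_cases h : t ≤ a
    · rw [if_pos h, Multiset.sum_add, Multiset.sum_singleton]
      congr 1
      rw [Multiset.filter_eq_self.mpr fun x hx => by
        rw [Multiset.eq_of_mem_replicate hx]; exact h]
      simp
    · rw [if_neg h, Multiset.sum_add, Multiset.sum_zero]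
      rw [Multiset.filter_eq_nil.mpr fun x hx hx' => by
        rw [Multiset.eq_of_mem_replicate hx] at hx'; exact h hx']
      simp

lemma exists_comp_perm {n : ℕ} (f g : Fin n → ℕ)
    (h : ((List.ofFn f : List ℕ) : Multiset ℕ) = ((List.ofFn g : List ℕ) : Multiset ℕ)) :
    ∃ π : Equiv.Perm (Fin n), f = g ∘ π := by
  have hp : (List.ofFn f).Perm (List.ofFn g) := Multiset.coe_eq_coe.mp h
  have m1 : Monotone (f ∘ Tuple.sort f) := Tuple.monotone_sort f
  have m2 : Monotone (g ∘ Tuple.sort g) := Tuple.monotone_sort g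
  have p1 : (List.ofFn (f ∘ Tuple.sort f)).Perm (List.ofFn f) :=
    Equiv.Perm.ofFn_comp_perm (Tuple.sort f) f
  have p2 : (List.ofFn (g ∘ Tuple.sort g)).Perm (List.ofFn g) :=
    Equiv.Perm.ofFn_comp_perm (Tuple.sort g) g
  have heq : List.ofFn (f ∘ Tuple.sort f) = List.ofFn (g ∘ Tuple.sort g) :=
    (p1.trans (hp.trans p2.symm)).eq_of_sortedLE m1.sortedLE_ofFn m2.sortedLE_ofFn
  have hfn : f ∘ Tuple.sort f = g ∘ Tuple.sort g := List.ofFn_injective heq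
  refine ⟨(Tuple.sort f).symm.trans (Tuple.sort g), ?_⟩
  funext i
  have h3 := congrFun hfn ((Tuple.sort f).symm i)
  simpa using h3

lemma map_univ_comp_perm {n : ℕ} (g : Fin n → ℕ) (π : Equiv.Perm (Fin n)) :
    Finset.univ.val.map (g ∘ π) = Finset.univ.val.map g := by
  rw [Fin.univ_val_map, Fin.univ_val_map]
  exact Multiset.coe_eq_coe.mpr (Equiv.Perm.ofFn_comp_perm π g)

lemma ofFn_pTuple {m n : ℕ} (μ : Fin m → ℕ) (h : (∑ i, μ i) = n) :
    List.ofFn (pTuple μ n) = (List.ofFn μ).flatMap fun a => List.replicate a a := by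
  have hlen : ((List.ofFn μ).flatMap fun a => List.replicate a a).length = n := by
    rw [List.length_flatMap, ← h]
    simp only [Function.comp_def, List.length_replicate]
    rw [List.map_id', List.sum_ofFn]
  apply List.ext_getElem (by rw [List.length_ofFn, hlen])
  intro i h1 h2
  rw [List.getElem_ofFn]
  show _ = _
  unfold pTuple
  rw [List.getD_eq_getElem _ _ (by rw [hlen]; simpa using h1)]

lemma coe_flatMap_replicate (l : List ℕ) :
    (((l.flatMap fun a => List.replicate a a) : List ℕ) : Multiset ℕ) = blowup (l : Multiset ℕ) := by
  induction l with
  | nil => simp [blowup]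
  | cons a l ih =>
    rw [List.flatMap_cons, ← Multiset.coe_add]
    show _ = blowup (a ::ₘ (l : Multiset ℕ))
    rw [blowup, Multiset.cons_bind, ← blowup, ← ih, Multiset.coe_replicate]

lemma roots_map_eq_blowup (F : ℂ[X]) :
    F.roots.map (fun r => rootMultiplicity r F)
      = blowup (F.roots.toFinset.val.map fun r => rootMultiplicity r F) := by
  conv_lhs => rw [← Multiset.toFinset_sum_count_nsmul_eq F.roots]
  rw [blowup, Multiset.bind_map]
  simp only [← Multiset.coe_mapAddMonoidHom, map_sum]
  simp only [Multiset.coe_mapAddMonoidHom]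
  show ∑ r ∈ F.roots.toFinset,
      Multiset.map (fun r => rootMultiplicity r F) (F.roots.count r • {r}) = _
  rw [show (Multiset.bind F.roots.toFinset.val
      fun a => Multiset.replicate (rootMultiplicity a F) (rootMultiplicity a F))
      = ∑ r ∈ F.roots.toFinset,
        Multiset.replicate (rootMultiplicity r F) (rootMultiplicity r F) from rfl]
  apply Finset.sum_congr rfl
  intro r _
  rw [Multiset.map_nsmul, Multiset.map_singleton, Multiset.nsmul_singleton,
    Polynomial.count_roots]

lemma eval_iter_deriv_rootMult_ne_zero {F : ℂ[X]} (hF : F ≠ 0) (r : ℂ) :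
    (Polynomial.derivative^[rootMultiplicity r F] F).eval r ≠ 0 := by
  rw [Polynomial.eval_iterate_derivative_rootMultiplicity]
  rw [nsmul_eq_mul]
  exact mul_ne_zero (Nat.cast_ne_zero.mpr (Nat.factorial_ne_zero _))
    (Polynomial.eval_divByMonic_pow_rootMultiplicity_ne_zero r hF)

end MyAux

theorem multEq_iff_exists_rearrangement (n m : ℕ) (hm : 0 < m)
    (μ : Fin m → ℕ) (hmono : Antitone μ) (hpos : ∀ i, 1 ≤ μ i) (hsum : ∑ i, μ i = n)
    (F : Polynomial ℂ) (hdeg : F.natDegree = n) (hndr : F.roots.toFinset.card = m)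
    (α : Fin n → ℂ) (hroots : F.roots = Finset.univ.val.map α) :
    multEq F μ ↔
      ∃ σ ∈ Sp μ n, ∀ i, (derivative^[σ i] F).eval (α i) ≠ 0 := by
  classical
  have hn : 1 ≤ n := by
    have h1 : (m : ℕ) ≤ ∑ i, μ i := by
      calc m = ∑ _i : Fin m, 1 := by simp
        _ ≤ _ := Finset.sum_le_sum fun i _ => hpos i
    omega
  have hF : F ≠ 0 := by
    intro h
    rw [h, Polynomial.natDegree_zero] at hdeg
    omega
  set k : ℂ → ℕ := fun r => rootMultiplicity r F with hk
  set K : Multiset ℕ := F.roots.toFinset.val.map k with hK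
  set M : Multiset ℕ := Finset.univ.val.map μ with hM
  have hmult_iff : multEq F μ ↔ K = M := Iff.rfl
  have hcard_roots : F.roots.card = n := by rw [hroots]; simp
  have hKcard : K.card = m := by rw [hK, Multiset.card_map]; exact hndr
  have hMcard : M.card = m := by simp [hM]
  have hKsum : K.sum = n := by
    have h1 : K.sum = ∑ r ∈ F.roots.toFinset, k r := rfl
    have h2 : ∑ r ∈ F.roots.toFinset, k r = ∑ r ∈ F.roots.toFinset, F.roots.count r :=
      Finset.sum_congr rfl fun r _ => (Polynomial.count_roots F).symm
    rw [h1, h2, Multiset.toFinset_sum_count_eq, hcard_roots]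
  have hMsum : M.sum = n := hsum
  have hKpos : ∀ x ∈ K, 1 ≤ x := by
    intro x hx
    obtain ⟨r, hr, rfl⟩ := Multiset.mem_map.mp hx
    rw [← Finset.mem_def, Multiset.mem_toFinset] at hr
    exact (Polynomial.rootMultiplicity_pos hF).mpr (Polynomial.isRoot_of_mem_roots hr)
  have hMpos : ∀ x ∈ M, 1 ≤ x := by
    intro x hx
    obtain ⟨i, _, rfl⟩ := Multiset.mem_map.mp hx
    exact hpos i
  have hblow : F.roots.map k = MyAux.blowup K := MyAux.roots_map_eq_blowup F
  have hptuple : Finset.univ.val.map (pTuple μ n) = MyAux.blowup M := by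
    rw [Fin.univ_val_map, MyAux.ofFn_pTuple μ hsum, MyAux.coe_flatMap_replicate, hM,
      Fin.univ_val_map]
  have hmapka : Finset.univ.val.map (k ∘ α) = F.roots.map k := by
    rw [hroots, Multiset.map_map]
  rw [hmult_iff]
  constructor
  · intro hmult
    refine ⟨k ∘ α, ?_, ?_⟩
    · have hmaps : ((List.ofFn (k ∘ α) : List ℕ) : Multiset ℕ)
          = ((List.ofFn (pTuple μ n) : List ℕ) : Multiset ℕ) := by
        rw [← Fin.univ_val_map, ← Fin.univ_val_map (pTuple μ n), hmapka, hblow, hptuple, hmult]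
      obtain ⟨π, hπ⟩ := MyAux.exists_comp_perm _ _ hmaps
      exact Finset.mem_image.mpr ⟨π, Finset.mem_univ _, hπ.symm⟩
    · intro i
      exact MyAux.eval_iter_deriv_rootMult_ne_zero hF (α i)
  · rintro ⟨σ, hσSp, hne⟩
    obtain ⟨π, -, hπ⟩ := Finset.mem_image.mp hσSp
    have hpoint : ∀ i, k (α i) ≤ σ i := by
      intro i
      by_contra hlt
      push_neg at hlt
      exact hne i (Polynomial.isRoot_iterate_derivative_of_lt_rootMultiplicity hlt)
    have hdom : ∀ t, (K.filter (t ≤ ·)).sum ≤ (M.filter (t ≤ ·)).sum := by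
      intro t
      have l1 : (K.filter (t ≤ ·)).sum = ((Finset.univ.val.map (k ∘ α)).filter (t ≤ ·)).card := by
        rw [hmapka, hblow, MyAux.card_filter_blowup]
      have l2 : (M.filter (t ≤ ·)).sum = ((Finset.univ.val.map σ).filter (t ≤ ·)).card := by
        rw [← hπ, MyAux.map_univ_comp_perm, hptuple, MyAux.card_filter_blowup]
      rw [l1, l2, Multiset.filter_map, Multiset.filter_map, Multiset.card_map,
        Multiset.card_map]
      exact Multiset.card_le_card
        (Multiset.monotone_filter_right _ fun i ht => le_trans ht (hpoint i))
    exact MyAux.multiset_eq_of_dominance K M (by rw [hKcard, hMcard]) (by rw [hKsum, hMsum])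
      hKpos hMpos hdom
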